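/- Let a be an odd positive integer and b = 2b' with b' odd positive, a and b coprime, and a ≡ 3 (mod 4). Then (2a+2b / a) · (-(a+b) / b') = 1, where (·/·) denotes the Kronecker symbol and the numerator -(a+b) is interpreted via ((-1)/b')·((a+b)/b'). -/
import Mathlib


/-- The Kronecker symbol `(a/n)` for a positive integer `n`: the Jacobi symbol on the odd
part of `n`, times the Kronecker symbol at 2 raised to the 2-adic valuation of `n`. -/
def kron (a : ℤ) (n : ℕ) : ℤ :=
  (if a % 8 = 1 ∨ a % 8 = 7 then 1 else if a % 8 = 3 ∨ a % 8 = 5 then -1 else 0) ^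
      (n.factorization 2) *
    jacobiSym a (n / 2 ^ (n.factorization 2))

lemma kron_odd (x : ℤ) {n : ℕ} (h : n % 2 = 1) : kron x n = jacobiSym x n := by
  have h2 : n.factorization 2 = 0 :=
    Nat.factorization_eq_zero_of_not_dvd (by omega)
  simp [kron, h2]

theorem kron_product_one_mixed (a b' : ℕ) (ha : 0 < a) (hb' : 0 < b')
    (haodd : a % 2 = 1) (hb'odd : b' % 2 = 1)
    (hcop : Nat.Coprime a (2 * b')) (ha4 : a % 4 = 3) :
    kron (2*(a : ℤ) + 2*(2*b')) a *
      (kron (-1) b' * kron ((a : ℤ) + 2*b') b') = 1 := by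
  rw [kron_odd _ haodd, kron_odd _ hb'odd, kron_odd _ hb'odd]
  have hb'Odd : Odd b' := Nat.odd_iff.mpr hb'odd
  have hcopab : Nat.Coprime a b' := (Nat.coprime_mul_iff_right.mp hcop).2
  have hgcd : ((b' : ℤ)).gcd a = 1 := by
    simpa [Int.gcd_natCast_natCast] using hcopab.symm
  -- first symbol: J(2a+4b' | a) = J(b' | a)
  have h1 : jacobiSym (2*(a : ℤ) + 2*(2*b')) a = jacobiSym (b' : ℤ) a := by
    have hmod : (2*(a : ℤ) + 2*(2*b')) % a = ((2:ℤ)^2 * b') % a := by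
      have : 2*(a : ℤ) + 2*(2*b') = (2:ℤ)^2 * b' + a * 2 := by ring
      rw [this, Int.add_mul_emod_self_left]
    rw [jacobiSym.mod_left' hmod, jacobiSym.mul_left, jacobiSym.sq_one' (by
      rw [show (2:ℤ) = ((2:ℕ):ℤ) from rfl, Int.gcd_natCast_natCast]
      exact (Nat.coprime_mul_iff_right.mp hcop).1.symm), one_mul]
  -- third symbol: J(a+2b' | b') = J(a | b')
  have h3 : jacobiSym ((a : ℤ) + 2*b') b' = jacobiSym (a : ℤ) b' := by
    have hmod : ((a : ℤ) + 2*b') % b' = (a : ℤ) % b' := by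
      have : (a : ℤ) + 2*b' = (a : ℤ) + b' * 2 := by ring
      rw [this, Int.add_mul_emod_self_left]
    exact jacobiSym.mod_left' hmod
  rw [h1, h3]
  rcases Nat.odd_mod_four_iff.mp hb'odd with hb1 | hb3
  · rw [jacobiSym.at_neg_one hb'Odd, ZMod.χ₄_nat_one_mod_four hb1,
      jacobiSym.quadratic_reciprocity_one_mod_four' (Nat.odd_iff.mpr haodd) hb1]
    rw [one_mul, ← sq]
    exact jacobiSym.sq_one hgcd
  · rw [jacobiSym.at_neg_one hb'Odd, ZMod.χ₄_nat_three_mod_four hb3,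
      jacobiSym.quadratic_reciprocity_three_mod_four ha4 hb3]
    rw [jacobiSym.quadratic_reciprocity_three_mod_four hb3 ha4]
    ring_nf
    exact jacobiSym.sq_one (by simpa [Int.gcd_natCast_natCast] using hcopab)
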